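/- Let G be the graph obtained from K7 by deleting two nonadjacent edges and then performing a Δ-Y exchange on a triangle having exactly one vertex incident to a deleted edge. Then G contains K_{4,4} minus an edge as a minor. -/

import Mathlib

open SimpleGraph

/-- `H` is a minor of `G`: branch-set formulation. -/
def IsMinor {W V : Type*} (H : SimpleGraph W) (G : SimpleGraph V) : Prop :=
  ∃ ρ : W → Set V,
    (∀ w, (ρ w).Nonempty) ∧
    (∀ w, (G.induce (ρ w)).Connected) ∧
    (Pairwise fun w w' => Disjoint (ρ w) (ρ w')) ∧
    ∀ ⦃w w'⦄, H.Adj w w' → ∃ a ∈ ρ w, ∃ b ∈ ρ w', G.Adj a b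

/-- Δ-Y exchange on the triangle `v₁ v₂ v₃`. -/
def deltaY {V : Type*} (G : SimpleGraph V) (v₁ v₂ v₃ : V) : SimpleGraph (V ⊕ Unit) where
  Adj x y :=
    match x, y with
    | .inl a, .inl b => G.Adj a b ∧ s(a, b) ∉ ({s(v₁, v₂), s(v₂, v₃), s(v₁, v₃)} : Set (Sym2 V))
    | .inl a, .inr _ => a = v₁ ∨ a = v₂ ∨ a = v₃
    | .inr _, .inl a => a = v₁ ∨ a = v₂ ∨ a = v₃
    | .inr _, .inr _ => False
  symm := ⟨by
    rintro (a | a) (b | b) h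
    · exact ⟨h.1.symm, by rw [show s(b, a) = s(a, b) from Sym2.eq_swap]; exact h.2⟩
    · exact h
    · exact h
    · exact h⟩
  loopless := ⟨by
    rintro (a | a) h
    · exact G.loopless.irrefl a h.1
    · exact h⟩

/-- `K_{4,4}` minus an edge (the edge between `inl 0` and `inr 0`). -/
def K44e : SimpleGraph (Fin 4 ⊕ Fin 4) where
  Adj x y :=
    match x, y with
    | .inl i, .inr j => ¬(i = 0 ∧ j = 0)
    | .inr j, .inl i => ¬(i = 0 ∧ j = 0)
    | _, _ => False
  symm := ⟨by rintro (i | i) (j | j) h <;> exact h⟩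
  loopless := ⟨by rintro (i | i) h <;> exact h⟩

/-- Vertices `0,…,6` stand for `v₁,…,v₇`.  `G` is `K₇` minus the nonadjacent edges
`v₁v₂`, `v₃v₄`; `G'` is obtained by the Δ-Y exchange on the triangle `{v₄, v₆, v₇}`
(which has exactly one vertex, `v₄`, incident to a deleted edge), with `Sum.inr ()`
being the new vertex `v₈`. -/
def G₄ : SimpleGraph (Fin 7) := (⊤ : SimpleGraph (Fin 7)).deleteEdges {s(0, 1), s(2, 3)}

def G₄' : SimpleGraph (Fin 7 ⊕ Unit) := deltaY G₄ 3 5 6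

/-- Branch sets witnessing the `K_{4,4}-e` minor, with bipartition
`{v₁, v₂, v₅, v₈}` and `{v₃, v₄, v₆, v₇}` (the missing edge of `K44e` corresponding to
the nonadjacent pair `v₈, v₃`). -/
def ρ₄ : Fin 4 ⊕ Fin 4 → Set (Fin 7 ⊕ Unit) :=
  Sum.elim
    ![{Sum.inr ()}, {Sum.inl 0}, {Sum.inl 1}, {Sum.inl 4}]
    ![{Sum.inl 2}, {Sum.inl 3}, {Sum.inl 5}, {Sum.inl 6}]


lemma singleton_induce_connected {V : Type*} (G : SimpleGraph V) (v : V) :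
    (G.induce ({v} : Set V)).Connected := by
  rw [connected_iff]
  refine ⟨fun a b => ?_, ⟨⟨v, rfl⟩⟩⟩
  obtain ⟨a, ha⟩ := a; obtain ⟨b, hb⟩ := b
  simp only [Set.mem_singleton_iff] at ha hb
  subst ha; subst hb; rfl

lemma adj_inl_inl (a b : Fin 7)
    (h : a ≠ b ∧ s(a,b) ≠ s(0,1) ∧ s(a,b) ≠ s(2,3) ∧ s(a,b) ≠ s((3:Fin 7),5)
      ∧ s(a,b) ≠ s((5:Fin 7),6) ∧ s(a,b) ≠ s((3:Fin 7),6)) :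
    G₄'.Adj (.inl a) (.inl b) := by
  obtain ⟨h1, h2, h3, h4, h5, h6⟩ := h
  refine ⟨?_, ?_⟩
  · rw [G₄, deleteEdges_adj]
    refine ⟨by simpa using h1, ?_⟩
    simp only [Set.mem_insert_iff, Set.mem_singleton_iff]
    tauto
  · simp only [Set.mem_insert_iff, Set.mem_singleton_iff]
    tauto

/-- `K₇` minus two nonadjacent edges, followed by a Δ-Y exchange on a
triangle having exactly one vertex incident to a deleted edge, contains `K_{4,4} - e`
as a minor, witnessed by the parts `{v₁, v₂, v₅, v₈}` and `{v₃, v₄, v₆, v₇}`. -/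
theorem K7_minus_nonadjacent_deltaY_has_K44e_minor :
    ((∀ w, (ρ₄ w).Nonempty) ∧
      (∀ w, (G₄'.induce (ρ₄ w)).Connected) ∧
      (Pairwise fun w w' => Disjoint (ρ₄ w) (ρ₄ w')) ∧
      ∀ ⦃w w'⦄, K44e.Adj w w' → ∃ a ∈ ρ₄ w, ∃ b ∈ ρ₄ w', G₄'.Adj a b) ∧
    IsMinor K44e G₄' := by
  have main : (∀ w, (ρ₄ w).Nonempty) ∧
      (∀ w, (G₄'.induce (ρ₄ w)).Connected) ∧
      (Pairwise fun w w' => Disjoint (ρ₄ w) (ρ₄ w')) ∧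
      ∀ ⦃w w'⦄, K44e.Adj w w' → ∃ a ∈ ρ₄ w, ∃ b ∈ ρ₄ w', G₄'.Adj a b := by
    refine ⟨?_, ?_, ?_, ?_⟩
    · rintro (i | i) <;> fin_cases i <;> exact ⟨_, rfl⟩
    · rintro (i | i) <;> fin_cases i <;> exact singleton_induce_connected _ _
    · rintro (i | i) (j | j) h <;> fin_cases i <;> fin_cases j <;>
        simp_all [ρ₄, Set.disjoint_singleton]
    · rintro (i | i) (j | j) h <;> fin_cases i <;> fin_cases j <;>
        first
        | exact h.elim
        | exact (h ⟨rfl, rfl⟩).elim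
        | exact ⟨_, rfl, _, rfl, adj_inl_inl _ _ (by decide)⟩
        | exact ⟨_, rfl, _, rfl, Or.inl rfl⟩
        | exact ⟨_, rfl, _, rfl, Or.inr (Or.inl rfl)⟩
        | exact ⟨_, rfl, _, rfl, Or.inr (Or.inr rfl)⟩
  exact ⟨main, ρ₄, main⟩
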